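/- Let φ be slope-restricted in [α, β]. For any diagonal matrix T with nonnegative entries and any u, v ∈ ℝᵐ, with p := Φ(u) − Φ(v): ∑_i T_ii (p_i − α(u_i − v_i))(p_i − β(u_i − v_i)) ≤ 0, equivalently the quadratic form [u−v; p]ᵀ [[−2αβT, (α+β)T],[(α+β)T, −2T]] [u−v; p] ≥ 0. -/

import Mathlib

open Matrix

lemma key_term {φ : ℝ → ℝ} {α β : ℝ} (hαβ : α ≤ β)
    (hslope : ∀ a b : ℝ, a ≠ b → α ≤ (φ a - φ b) / (a - b) ∧ (φ a - φ b) / (a - b) ≤ β)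
    (a b : ℝ) :
    ((φ a - φ b) - α * (a - b)) * ((φ a - φ b) - β * (a - b)) ≤ 0 := by
  by_cases h : a = b
  · simp [h]
  · obtain ⟨h1, h2⟩ := hslope a b h
    have hd : a - b ≠ 0 := sub_ne_zero.mpr h
    have hkey : (φ a - φ b) - α * (a - b) = ((φ a - φ b) / (a - b) - α) * (a - b) := by
      field_simp
    have hkey2 : (φ a - φ b) - β * (a - b) = ((φ a - φ b) / (a - b) - β) * (a - b) := by
      field_simp
    rw [hkey, hkey2]
    have : ((φ a - φ b) / (a - b) - α) * (a - b) * (((φ a - φ b) / (a - b) - β) * (a - b))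
        = ((φ a - φ b) / (a - b) - α) * ((φ a - φ b) / (a - b) - β) * ((a - b) ^ 2) := by
      ring
    rw [this]
    apply mul_nonpos_of_nonpos_of_nonneg
    · exact mul_nonpos_of_nonneg_of_nonpos (by linarith) (by linarith)
    · positivity

/-- Incremental quadratic constraint for entrywise slope-restricted nonlinearities:
the weighted sum `∑ T_i (p_i − α(u_i−v_i))(p_i − β(u_i−v_i))` is nonpositive, and
equivalently the associated block quadratic form is nonnegative. -/
theorem slope_restricted_quadratic_constraint {m : ℕ} (φ : ℝ → ℝ) (α β : ℝ)
    (hαβ : α ≤ β)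
    (hslope : ∀ a b : ℝ, a ≠ b → α ≤ (φ a - φ b) / (a - b) ∧ (φ a - φ b) / (a - b) ≤ β)
    (T : Fin m → ℝ) (hT : ∀ i, 0 ≤ T i) (u v : Fin m → ℝ) :
    (∑ i, T i * ((φ (u i) - φ (v i)) - α * (u i - v i)) *
        ((φ (u i) - φ (v i)) - β * (u i - v i)) ≤ 0) ∧
    0 ≤ dotProduct
        (Sum.elim (u - v) (fun i => φ (u i) - φ (v i)))
        ((Matrix.fromBlocks
            ((-2 * α * β) • Matrix.diagonal T) ((α + β) • Matrix.diagonal T)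
            ((α + β) • Matrix.diagonal T) ((-2 : ℝ) • Matrix.diagonal T)).mulVec
          (Sum.elim (u - v) (fun i => φ (u i) - φ (v i)))) := by
  have hsum : ∑ i, T i * ((φ (u i) - φ (v i)) - α * (u i - v i)) *
      ((φ (u i) - φ (v i)) - β * (u i - v i)) ≤ 0 := by
    apply Finset.sum_nonpos
    intro i _
    rw [mul_assoc]
    exact mul_nonpos_of_nonneg_of_nonpos (hT i) (key_term hαβ hslope (u i) (v i))
  refine ⟨hsum, ?_⟩
  have heq : dotProduct
        (Sum.elim (u - v) (fun i => φ (u i) - φ (v i)))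
        ((Matrix.fromBlocks
            ((-2 * α * β) • Matrix.diagonal T) ((α + β) • Matrix.diagonal T)
            ((α + β) • Matrix.diagonal T) ((-2 : ℝ) • Matrix.diagonal T)).mulVec
          (Sum.elim (u - v) (fun i => φ (u i) - φ (v i))))
      = -2 * ∑ i, T i * ((φ (u i) - φ (v i)) - α * (u i - v i)) *
          ((φ (u i) - φ (v i)) - β * (u i - v i)) := by
    simp only [dotProduct, Matrix.mulVec, Matrix.fromBlocks, Fintype.sum_sum_type,
      Sum.elim_inl, Sum.elim_inr, Matrix.of_apply, Matrix.smul_apply, Matrix.diagonal_apply,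
      Pi.sub_apply, smul_eq_mul]
    simp [Finset.mul_sum, Finset.sum_ite_eq', mul_ite, ← Finset.sum_add_distrib,
      Finset.mul_sum, ← Finset.sum_neg_distrib]
    apply Finset.sum_congr rfl
    intro i _
    ring
  rw [heq]
  linarith
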